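/- arXiv:2205.15770 — 7 statements merged into one kernel-verified Lean document; each statement's English description precedes it below -/
import Mathlib

section
/- Let M and D be real symmetric positive definite n×n matrices, let 0 < α < β be reals such that M ⪯ β·D (so the spectrum of D⁻¹M is contained in (0, β]), let k ∈ ℕ, set s̄ = (β+α)/(β−α) and c₁ = (1 + 1/C_{k+1}(s̄))⁻¹. Then the degree-k Chebyshev–Jacobi preconditioner P = (I − T̃_{k+1}(D⁻¹M)) M⁻¹ satisfies P ⪯ c₁⁻¹ · M⁻¹ in the Loewner order (equivalently, c₁·M ⪯ C_M for C_M = P⁻¹). (First inequality of Lemma 1.) -/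
open Polynomial Matrix

/-- The polynomial `t ↦ C_{k+1}((β+α-2t)/(β-α)) / C_{k+1}((β+α)/(β-α))`, where `C` is the
Chebyshev polynomial of the first kind. -/
noncomputable def Ttilde (α β : ℝ) (k : ℕ) : Polynomial ℝ :=
  Polynomial.C ((Polynomial.Chebyshev.T ℝ (k + 1)).eval ((β + α) / (β - α)))⁻¹ *
    ((Polynomial.Chebyshev.T ℝ (k + 1)).comp
      (Polynomial.C ((β + α) / (β - α)) - Polynomial.C (2 / (β - α)) * Polynomial.X))

/-- The degree-`k` Chebyshev–Jacobi preconditioner `P = (I - T̃_{k+1}(D⁻¹M)) M⁻¹`. -/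
noncomputable def chebJacobiPrecond {n : Type*} [Fintype n] [DecidableEq n]
    (M D : Matrix n n ℝ) (α β : ℝ) (k : ℕ) : Matrix n n ℝ :=
  (1 - Polynomial.aeval (D⁻¹ * M) (Ttilde α β k)) * M⁻¹

lemma cheb_aux (x : ℝ) (hx : 1 ≤ x) (m : ℕ) :
    1 ≤ (Chebyshev.T ℝ m).eval x ∧
      (Chebyshev.T ℝ m).eval x ≤ (Chebyshev.T ℝ (m + 1)).eval x := by
  induction m with
  | zero => simpa [Chebyshev.T_zero, Chebyshev.T_one] using hx
  | succ m ih =>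
    obtain ⟨h1, h2⟩ := ih
    have key : (Chebyshev.T ℝ ((m : ℤ) + 1 + 1)).eval x =
        2 * x * (Chebyshev.T ℝ ((m : ℤ) + 1)).eval x - (Chebyshev.T ℝ (m : ℤ)).eval x := by
      rw [show ((m : ℤ) + 1 + 1) = (m : ℤ) + 2 by ring, Chebyshev.T_add_two]
      simp
    constructor
    · push_cast
      linarith
    · push_cast at key ⊢
      rw [key]
      nlinarith

lemma cheb_one_le (x : ℝ) (hx : 1 ≤ x) (k : ℕ) : 1 ≤ (Chebyshev.T ℝ (k + 1)).eval x := by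
  have := (cheb_aux x hx (k + 1)).1
  push_cast at this ⊢
  exact this

lemma cheb_neg_one_le (x : ℝ) (hx : -1 ≤ x) (k : ℕ) :
    -1 ≤ (Chebyshev.T ℝ (k + 1)).eval x := by
  rcases le_or_gt x 1 with h | h
  · have hc : x = Real.cos (Real.arccos x) := (Real.cos_arccos hx h).symm
    rw [hc, Chebyshev.T_real_cos]
    exact Real.neg_one_le_cos _
  · linarith [cheb_one_le x h.le k]

lemma aeval_conj {A : Type*} [Ring A] [Algebra ℝ A] (g g' x : A)
    (h1 : g * g' = 1) (h2 : g' * g = 1) (p : ℝ[X]) :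
    aeval (g * x * g') p = g * aeval x p * g' := by
  induction p using Polynomial.induction_on with
  | C a =>
    simp only [aeval_C]
    rw [mul_assoc, Algebra.commutes a g', ← mul_assoc, h1, one_mul]
  | add p q hp hq => simp [hp, hq, mul_add, add_mul]
  | monomial nn aa ih =>
    have l1 : (aeval (g * x * g')) (C aa * X ^ (nn + 1))
        = (aeval (g * x * g')) (C aa * X ^ nn) * (g * x * g') := by
      rw [pow_succ, ← mul_assoc, _root_.map_mul, aeval_X]
    have l2 : (aeval x) (C aa * X ^ (nn + 1)) = (aeval x) (C aa * X ^ nn) * x := by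
      rw [pow_succ, ← mul_assoc, _root_.map_mul, aeval_X]
    set A' := (aeval x) (C aa * X ^ nn) with hA
    rw [l1, l2, ih, show g * A' * g' * (g * x * g') = g * (A' * (g' * g) * x) * g' by
      noncomm_ring, h2, mul_one]

lemma aeval_diagonal {n : Type*} [Fintype n] [DecidableEq n] (d : n → ℝ) (p : ℝ[X]) :
    aeval (Matrix.diagonal d) p = Matrix.diagonal (fun i => p.eval (d i)) := by
  have h := aeval_algHom_apply (Matrix.diagonalAlgHom (n := n) (α := ℝ) ℝ) d p
  simp only [diagonalAlgHom_apply] at h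
  rw [h, Matrix.diagonal_eq_diagonal_iff]
  intro i
  simp [Polynomial.aeval_fn_apply, Polynomial.coe_aeval_eq_eval]

lemma posdef_conj {n : Type*} [Fintype n] [DecidableEq n] {A B : Matrix n n ℝ}
    (hA : A.PosDef) (hB : IsUnit B.det) : (Bᴴ * A * B).PosDef := by
  refine Matrix.PosDef.of_dotProduct_mulVec_pos (Matrix.isHermitian_conjTranspose_mul_mul B hA.1) fun x hx => ?_
  have hBx : B *ᵥ x ≠ 0 := by
    intro hz
    apply hx
    have := congrArg (fun y => B⁻¹ *ᵥ y) hz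
    simpa [Matrix.mulVec_mulVec, Matrix.nonsing_inv_mul B hB] using this
  simpa only [star_mulVec, dotProduct_mulVec, vecMul_vecMul] using hA.dotProduct_mulVec_pos hBx

lemma eigenvalues_le_of {n : Type*} [Fintype n] [DecidableEq n] {A : Matrix n n ℝ}
    (hA : A.IsHermitian) {β : ℝ}
    (h : (β • (1 : Matrix n n ℝ) - A).PosSemidef) (i : n) : hA.eigenvalues i ≤ β := by
  set v : n → ℝ := ⇑(hA.eigenvectorBasis i) with hv_def
  have hv : A *ᵥ v = hA.eigenvalues i • v := hA.mulVec_eigenvectorBasis i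
  have hvv : v ⬝ᵥ v = 1 := by
    have h1 : ‖hA.eigenvectorBasis i‖ = 1 := hA.eigenvectorBasis.orthonormal.1 i
    have h2 : (inner ℝ (hA.eigenvectorBasis i) (hA.eigenvectorBasis i) : ℝ) = 1 := by
      rw [real_inner_self_eq_norm_mul_norm, h1, mul_one]
    rw [EuclideanSpace.inner_eq_star_dotProduct] at h2
    simpa using h2
  have h0 := h.dotProduct_mulVec_nonneg v
  rw [Matrix.sub_mulVec, Matrix.smul_mulVec, Matrix.one_mulVec, hv] at h0
  simp only [star_trivial, dotProduct_sub, dotProduct_smul, hvv, smul_eq_mul, mul_one] at h0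
  linarith

open scoped MatrixOrder in
lemma exists_sqrt_herm {n : Type*} [Fintype n] [DecidableEq n] {D : Matrix n n ℝ}
    (hD : D.PosSemidef) : ∃ Ds : Matrix n n ℝ, Ds.IsHermitian ∧ Ds * Ds = D :=
  ⟨CFC.sqrt D, (Matrix.nonneg_iff_posSemidef.mp (CFC.sqrt_nonneg D)).1,
    CFC.sqrt_mul_sqrt_self D (Matrix.nonneg_iff_posSemidef.mpr hD)⟩

theorem stmt0 {n : Type*} [Fintype n] [DecidableEq n]
    (M D : Matrix n n ℝ) (hM : M.PosDef) (hD : D.PosDef)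
    (α β : ℝ) (hα : 0 < α) (hαβ : α < β)
    (hspec : (β • D - M).PosSemidef)
    (k : ℕ)
    (c₁ : ℝ) (hc₁ : c₁ = (1 + 1 / (Polynomial.Chebyshev.T ℝ (k + 1)).eval ((β + α) / (β - α)))⁻¹) :
    (c₁⁻¹ • M⁻¹ - chebJacobiPrecond M D α β k).PosSemidef := by
  classical
  have hβα : (0:ℝ) < β - α := sub_pos.2 hαβ
  set sb : ℝ := (β + α) / (β - α) with hsb
  have hsb1 : 1 ≤ sb := (one_le_div hβα).2 (by linarith)
  set Ce : ℝ := (Chebyshev.T ℝ (k + 1)).eval sb with hCedef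
  have hCe1 : 1 ≤ Ce := cheb_one_le sb hsb1 k
  have hCe0 : 0 < Ce := lt_of_lt_of_le one_pos hCe1
  have hc₁inv : c₁⁻¹ = 1 + 1 / Ce := by rw [hc₁]; exact inv_inv _
  -- matrix setup
  have hDdet : IsUnit D.det := isUnit_iff_ne_zero.2 hD.det_pos.ne'
  obtain ⟨Ds, hDsH, hDs2⟩ := exists_sqrt_herm hD.posSemidef
  have hDsdet : IsUnit Ds.det := by
    refine isUnit_iff_ne_zero.2 fun h0 => hD.det_pos.ne' ?_
    rw [← hDs2, det_mul, h0, mul_zero]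
  set R := Ds⁻¹ with hRdef
  have h1 : Ds * R = 1 := Matrix.mul_nonsing_inv Ds hDsdet
  have h2 : R * Ds = 1 := Matrix.nonsing_inv_mul Ds hDsdet
  have hRH : R.IsHermitian := hDsH.inv
  have hRdet : IsUnit R.det := by
    refine isUnit_iff_ne_zero.2 fun h0 => ?_
    have := congrArg Matrix.det h2
    rw [det_mul, h0, zero_mul, det_one] at this
    exact zero_ne_one this
  have hRR : R * R = D⁻¹ := by rw [hRdef, ← Matrix.mul_inv_rev, hDs2]
  set S := R * M * R with hSdef
  have hSpd : S.PosDef := by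
    have := posdef_conj hM hRdet
    rwa [hRH.eq] at this
  have hSH : S.IsHermitian := hSpd.1
  have hRDR : R * D * R = 1 := by
    rw [← hDs2, show R * (Ds * Ds) * R = (R * Ds) * (Ds * R) by noncomm_ring, h2, h1, one_mul]
  have hub : (β • (1 : Matrix n n ℝ) - S).PosSemidef := by
    have hc := hspec.mul_mul_conjTranspose_same R
    rw [hRH.eq] at hc
    have he : R * (β • D - M) * R = β • (1 : Matrix n n ℝ) - S := by
      rw [Matrix.mul_sub, Matrix.sub_mul, hSdef, Matrix.mul_smul, Matrix.smul_mul, hRDR]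
    rwa [he] at hc
  set μ := hSH.eigenvalues with hμdef
  have hμpos : ∀ i, 0 < μ i := hSpd.eigenvalues_pos
  have hμle : ∀ i, μ i ≤ β := fun i => eigenvalues_le_of hSH hub i
  set U : Matrix n n ℝ := (hSH.eigenvectorUnitary : Matrix n n ℝ) with hUdef
  have hU1 : U * star U = 1 := (Matrix.mem_unitaryGroup_iff).mp hSH.eigenvectorUnitary.2
  have hU2 : star U * U = 1 := (Matrix.mem_unitaryGroup_iff').mp hSH.eigenvectorUnitary.2
  have hspec_thm : S = U * Matrix.diagonal μ * star U := by
    have := hSH.spectral_theorem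
    rwa [RCLike.ofReal_real_eq_id, Function.id_comp] at this
  have hSinv : S⁻¹ = U * Matrix.diagonal (fun i => (μ i)⁻¹) * star U := by
    apply Matrix.inv_eq_right_inv
    rw [hspec_thm, show U * Matrix.diagonal μ * star U * (U * Matrix.diagonal (fun i => (μ i)⁻¹)
        * star U) = U * (Matrix.diagonal μ * (star U * U) * Matrix.diagonal (fun i => (μ i)⁻¹))
        * star U by noncomm_ring, hU2, mul_one, Matrix.diagonal_mul_diagonal]
    have : (fun i => μ i * (μ i)⁻¹) = fun _ => (1:ℝ) := by
      funext i; exact mul_inv_cancel₀ (hμpos i).ne'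
    rw [this, Matrix.diagonal_one, mul_one, hU1]
  have haev : ∀ p : ℝ[X], aeval S p = U * Matrix.diagonal (fun i => p.eval (μ i)) * star U := by
    intro p
    rw [hspec_thm, aeval_conj U (star U) _ hU1 hU2, aeval_diagonal]
  -- the polynomial q
  set q : ℝ[X] := Polynomial.C (c₁⁻¹ - 1) + Ttilde α β k with hqdef
  have hMinv : M⁻¹ = R * S⁻¹ * R := by
    have hs : S⁻¹ = Ds * M⁻¹ * Ds := by
      rw [hSdef, Matrix.mul_inv_rev, Matrix.mul_inv_rev, hRdef,
        Matrix.nonsing_inv_nonsing_inv Ds hDsdet, mul_assoc]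
    rw [hs, show R * (Ds * M⁻¹ * Ds) * R = (R * Ds) * M⁻¹ * (Ds * R) by noncomm_ring, h2, h1,
      one_mul, mul_one]
  have hDinvM : D⁻¹ * M = R * S * Ds := by
    rw [hSdef, show R * (R * M * R) * Ds = (R * R) * M * (R * Ds) by noncomm_ring, h2, hRR,
      mul_one]
  have key : c₁⁻¹ • M⁻¹ - chebJacobiPrecond M D α β k = R * (aeval S q * S⁻¹) * R := by
    rw [chebJacobiPrecond, hDinvM, aeval_conj R Ds S h2 h1, hMinv, hqdef, map_add, aeval_C,
      Algebra.algebraMap_eq_smul_one]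
    rw [show (1 - R * (aeval S (Ttilde α β k)) * Ds) * (R * S⁻¹ * R)
        = R * S⁻¹ * R - R * ((aeval S (Ttilde α β k)) * ((Ds * R) * S⁻¹)) * R by noncomm_ring,
      h1, one_mul]
    rw [show ((c₁⁻¹ - 1) • (1 : Matrix n n ℝ) + aeval S (Ttilde α β k)) * S⁻¹
        = (c₁⁻¹ - 1) • S⁻¹ + aeval S (Ttilde α β k) * S⁻¹ by
        rw [Matrix.add_mul, Matrix.smul_mul, one_mul]]
    rw [Matrix.mul_add, Matrix.add_mul, Matrix.mul_smul, Matrix.smul_mul, sub_smul, one_smul]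
    abel
  rw [key]
  have hmul : aeval S q * S⁻¹
      = U * Matrix.diagonal (fun i => q.eval (μ i) * (μ i)⁻¹) * star U := by
    rw [haev q, hSinv, show U * Matrix.diagonal (fun i => q.eval (μ i)) * star U *
        (U * Matrix.diagonal (fun i => (μ i)⁻¹) * star U)
        = U * (Matrix.diagonal (fun i => q.eval (μ i)) * (star U * U)
          * Matrix.diagonal (fun i => (μ i)⁻¹)) * star U by noncomm_ring, hU2, mul_one,
      Matrix.diagonal_mul_diagonal]
  rw [hmul]
  have hf : ∀ i, 0 ≤ q.eval (μ i) * (μ i)⁻¹ := by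
    intro i
    have ht0 : 0 < μ i := hμpos i
    have htβ : μ i ≤ β := hμle i
    have hqe : q.eval (μ i) = (c₁⁻¹ - 1) +
        ((Chebyshev.T ℝ ((k : ℤ) + 1)).eval ((β + α) / (β - α)))⁻¹ *
          (Chebyshev.T ℝ ((k : ℤ) + 1)).eval ((β + α) / (β - α) - 2 / (β - α) * μ i) := by
      simp [hqdef, Ttilde, eval_comp]
    rw [← hsb, ← hCedef] at hqe
    have hu : -1 ≤ (β + α) / (β - α) - 2 / (β - α) * μ i := by
      have he : (β + α) / (β - α) - 2 / (β - α) * μ i + 1 = 2 * (β - μ i) / (β - α) := by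
        field_simp; ring
      have h0 : 0 ≤ 2 * (β - μ i) / (β - α) :=
        div_nonneg (by linarith) (by linarith)
      linarith [he ▸ h0]
    rw [← hsb] at hu
    have hT := cheb_neg_one_le _ hu k
    have hq0 : 0 ≤ q.eval (μ i) := by
      rw [hqe, hc₁inv]
      have h1C : 1 + 1 / Ce - 1 = Ce⁻¹ := by rw [one_div]; ring
      rw [h1C]
      have : Ce⁻¹ + Ce⁻¹ * (Chebyshev.T ℝ ((k : ℤ) + 1)).eval (sb - 2 / (β - α) * μ i)
          = Ce⁻¹ * (1 + (Chebyshev.T ℝ ((k : ℤ) + 1)).eval (sb - 2 / (β - α) * μ i)) := by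
        ring
      rw [this]
      exact mul_nonneg (inv_nonneg.2 hCe0.le) (by linarith)
    exact mul_nonneg hq0 (inv_nonneg.2 ht0.le)
  have hdiagPSD : (Matrix.diagonal fun i => q.eval (μ i) * (μ i)⁻¹).PosSemidef :=
    Matrix.posSemidef_diagonal_iff.mpr hf
  have hUconj : (U * Matrix.diagonal (fun i => q.eval (μ i) * (μ i)⁻¹) * star U).PosSemidef := by
    rw [Matrix.star_eq_conjTranspose]
    exact hdiagPSD.mul_mul_conjTranspose_same U
  have final := hUconj.mul_mul_conjTranspose_same R
  rw [hRH.eq] at final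
  exact final
end

section
/- Let M and D be real symmetric positive definite n×n matrices, let 0 < α < β be reals such that M ⪯ β·D, let k ∈ ℕ, set s̄ = (β+α)/(β−α) and c₂ = (1 − 1/C_{k+1}(s̄))⁻¹. Then the degree-k Chebyshev–Jacobi preconditioner P = (I − T̃_{k+1}(D⁻¹M)) M⁻¹ satisfies (c₂·β)⁻¹ · D⁻¹ ⪯ P in the Loewner order (equivalently, C_M ⪯ c₂·β·D for C_M = P⁻¹). (Second inequality of Lemma 1.) -/
open Polynomial Matrix

section Aux

open Set

/-- Nonneg, monotone and convex on `[1, ∞)`. -/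
def NiceFun (f : ℝ → ℝ) : Prop :=
  MonotoneOn f (Set.Ici 1) ∧ ConvexOn ℝ (Set.Ici 1) f ∧ ∀ x : ℝ, 1 ≤ x → 0 ≤ f x

lemma NiceFun.add {f g : ℝ → ℝ} (hf : NiceFun f) (hg : NiceFun g) :
    NiceFun (fun x => f x + g x) :=
  ⟨hf.1.add hg.1, hf.2.1.add hg.2.1, fun x hx => add_nonneg (hf.2.2 x hx) (hg.2.2 x hx)⟩

lemma NiceFun.mul {f g : ℝ → ℝ} (hf : NiceFun f) (hg : NiceFun g) :
    NiceFun (fun x => f x * g x) := by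
  refine ⟨?_, ?_, fun x hx => mul_nonneg (hf.2.2 x hx) (hg.2.2 x hx)⟩
  · intro x hx y hy hxy
    exact mul_le_mul (hf.1 hx hy hxy) (hg.1 hx hy hxy) (hg.2.2 x hx) (hf.2.2 y hy)
  · exact hf.2.1.mul hg.2.1 (fun x hx => hf.2.2 x hx) (fun x hx => hg.2.2 x hx)
      (hf.1.monovaryOn hg.1)

lemma niceFun_linear (a b : ℝ) (ha : 0 ≤ a) (hb : 0 ≤ a + b) :
    NiceFun (fun x => a * x + b) := by
  refine ⟨fun x hx y hy hxy => ?_, ⟨convex_Ici 1, fun x hx y hy p q hp hq hpq => ?_⟩,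
    fun x hx => ?_⟩
  · simp only [Set.mem_Ici] at hx hy; show a * x + b ≤ a * y + b; nlinarith
  · simp only [smul_eq_mul]; nlinarith
  · show 0 ≤ a * x + b; nlinarith

open Polynomial.Chebyshev in
lemma cheb_nice (n : ℕ) :
    NiceFun (fun x => (T ℝ n).eval x) ∧
      NiceFun (fun x => (T ℝ (n + 1)).eval x - (T ℝ n).eval x) := by
  induction n with
  | zero =>
      constructor
      · simpa [T_zero] using niceFun_linear 0 1 le_rfl (by norm_num)
      · simpa [T_zero, T_one, sub_eq_add_neg] using niceFun_linear 1 (-1) zero_le_one (by norm_num)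
  | succ n ih =>
      obtain ⟨hT, hD⟩ := ih
      have hT1 : NiceFun (fun x => (T ℝ (n + 1)).eval x) := by
        have := hT.add hD
        simpa using this
      constructor
      · push_cast
        exact hT1
      · have hrec : (T ℝ ((n : ℤ) + 2)) = 2 * X * T ℝ ((n : ℤ) + 1) - T ℝ (n : ℤ) :=
          T_add_two ℝ n
        have h2 : NiceFun (fun x => (2 * x + -2) * (T ℝ ((n : ℤ) + 1)).eval x) :=
          (niceFun_linear 2 (-2) (by norm_num) (by norm_num)).mul hT1
        have := h2.add hD
        push_cast
        convert this using 2 with x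
        rw [show ((n : ℤ) + 1 + 1) = (n : ℤ) + 2 by ring, hrec]
        simp
        ring

open Polynomial.Chebyshev in
lemma cheb_eval_one (m : ℤ) : (T ℝ m).eval 1 = 1 := by
  have := T_real_cos 0 m
  simpa using this

open Polynomial.Chebyshev in
lemma cheb_abs_le (m : ℤ) (u : ℝ) (h1 : -1 ≤ u) (h2 : u ≤ 1) :
    |(T ℝ m).eval u| ≤ 1 := by
  have := T_real_cos (Real.arccos u) m
  rw [Real.cos_arccos h1 h2] at this
  rw [this]
  exact Real.abs_cos_le_one _

open Polynomial.Chebyshev in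
lemma cheb_ge_self (n : ℕ) (x : ℝ) (hx : 1 ≤ x) : x ≤ (T ℝ ((n : ℤ) + 1)).eval x := by
  induction n with
  | zero => simp [T_one]
  | succ n ih =>
      have hD := (cheb_nice (n + 1)).2.2.2 x hx
      push_cast at hD ⊢
      linarith

open Polynomial.Chebyshev in
lemma scalar_key (α β : ℝ) (hα : 0 < α) (hαβ : α < β) (k : ℕ) (d : ℝ)
    (hd : 0 < d) (hdβ : d ≤ β) :
    (1 - 1 / (T ℝ ((k : ℤ) + 1)).eval ((β + α) / (β - α))) / β
      ≤ (1 - (Ttilde α β k).eval d) * d⁻¹ := by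
  have hw : (0:ℝ) < β - α := by linarith
  set sb : ℝ := (β + α) / (β - α) with hsb_def
  have hsb1 : 1 < sb := by rw [lt_div_iff₀ hw]; linarith
  set C : ℝ := (T ℝ ((k : ℤ) + 1)).eval sb with hC_def
  have hCsb : sb ≤ C := cheb_ge_self k sb hsb1.le
  have hC1 : 1 < C := lt_of_lt_of_le hsb1 hCsb
  have hC0 : (0:ℝ) < C := by linarith
  set u : ℝ := sb - 2 / (β - α) * d with hu_def
  set Tu : ℝ := (T ℝ ((k : ℤ) + 1)).eval u with hTu_def
  have hEval : (Ttilde α β k).eval d = C⁻¹ * Tu := by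
    simp [Ttilde, eval_comp, hu_def, hC_def, hsb_def, hTu_def]
  have hβ0 : (0:ℝ) < β := by linarith
  -- main pointwise bound
  have hTu_le : Tu ≤ C - (C - 1) * (d / β) := by
    rcases le_or_gt α d with hcase | hcase
    · -- u ∈ [-1, 1]
      have h1 : u ≤ 1 := by
        rw [hu_def, hsb_def]
        have h0 : (β - α) * (2 / (β - α) * d) = 2 * d := by field_simp
        rw [div_sub' hw.ne', div_le_one hw, h0]
        linarith
      have h2 : -1 ≤ u := by
        rw [hu_def, hsb_def]
        have h0 : (β - α) * (2 / (β - α) * d) = 2 * d := by field_simp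
        rw [div_sub' hw.ne', le_div_iff₀ hw, h0]
        linarith
      have := (abs_le.mp (cheb_abs_le ((k : ℤ) + 1) u h2 h1)).2
      have hdb : d / β ≤ 1 := (div_le_one hβ0).mpr hdβ
      nlinarith
    · -- convexity on [1, sb]
      have hlam0 : 0 ≤ d / α := by positivity
      have hlam1 : d / α ≤ 1 := (div_le_one hα).mpr hcase.le
      have hconv : ConvexOn ℝ (Set.Ici 1) (fun x => (T ℝ ((k : ℤ) + 1)).eval x) := by
        have := (cheb_nice (k + 1)).1.2.1
        push_cast at this
        exact this
      have harg : (d / α) • (1:ℝ) + (1 - d / α) • sb = u := by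
        rw [hsb_def, hu_def, hsb_def]
        simp only [smul_eq_mul]
        field_simp
        ring
      have hcvx := hconv.2 (Set.self_mem_Ici) (Set.mem_Ici.mpr hsb1.le)
        hlam0 (show (0:ℝ) ≤ 1 - d / α by linarith)
        (show d / α + (1 - d / α) = 1 by ring)
      rw [harg] at hcvx
      simp only [smul_eq_mul] at hcvx
      rw [cheb_eval_one] at hcvx
      simp only [mul_one] at hcvx
      have hdd : d / β ≤ d / α := div_le_div_of_nonneg_left hd.le hα hαβ.le
      have : (0:ℝ) ≤ (C - 1) * (d / α - d / β) :=
        mul_nonneg (by linarith) (by linarith)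
      rw [← hTu_def] at hcvx
      nlinarith
  -- conclude
  have h6 := mul_le_mul_of_nonneg_left hTu_le (inv_nonneg.mpr hC0.le)
  have h7 : C⁻¹ * (C - (C - 1) * (d / β)) = 1 - (1 - 1 / C) * (d / β) := by
    field_simp
  have h5 : (1 - 1 / C) * (d / β) ≤ 1 - C⁻¹ * Tu := by
    rw [h7] at h6; linarith
  rw [hEval]
  calc (1 - 1 / C) / β = ((1 - 1 / C) * (d / β)) * d⁻¹ := by
        field_simp
      _ ≤ (1 - C⁻¹ * Tu) * d⁻¹ :=
        mul_le_mul_of_nonneg_right h5 (inv_nonneg.mpr hd.le)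

variable {n : Type*} [Fintype n] [DecidableEq n]

lemma aeval_conj_mat (U V A : Matrix n n ℝ) (h1 : U * V = 1) (h2 : V * U = 1)
    (p : Polynomial ℝ) :
    Polynomial.aeval (U * A * V) p = U * Polynomial.aeval A p * V := by
  have hpow : ∀ m : ℕ, (U * A * V) ^ m = U * A ^ m * V := by
    intro m
    induction m with
    | zero => simpa using h1.symm
    | succ m ih =>
        rw [pow_succ, ih, pow_succ]
        calc U * A ^ m * V * (U * A * V) = U * A ^ m * (V * U) * A * V := by
              simp only [Matrix.mul_assoc]
          _ = U * (A ^ m * A) * V := by rw [h2]; simp only [Matrix.mul_assoc, Matrix.one_mul]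
  induction p using Polynomial.induction_on' with
  | add p q hp hq => simp [hp, hq, Matrix.mul_add, Matrix.add_mul]
  | monomial m a =>
      simp only [aeval_monomial, hpow, Algebra.algebraMap_eq_smul_one, smul_mul_assoc,
        Matrix.one_mul, Matrix.mul_smul, Matrix.smul_mul]

lemma aeval_diagonal_mat (d : n → ℝ) (p : Polynomial ℝ) :
    Polynomial.aeval (Matrix.diagonal d) p = Matrix.diagonal (fun i => p.eval (d i)) := by
  rw [show Matrix.diagonal d = Matrix.diagonalAlgHom (R := ℝ) (α := ℝ) d from rfl,
    Polynomial.aeval_algHom_apply, Matrix.diagonalAlgHom_apply]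
  have : (Polynomial.aeval d p : n → ℝ) = fun i => p.eval (d i) := by
    funext i
    have h := (Polynomial.aeval_algHom_apply (Pi.evalAlgHom ℝ (fun _ => ℝ) i) d p).symm
    simp only [Pi.evalAlgHom_apply] at h
    rw [h, congrFun (Polynomial.coe_aeval_eq_eval (d i)) p]
  rw [this]


end Aux

theorem stmt1 {n : Type*} [Fintype n] [DecidableEq n]
    (M D : Matrix n n ℝ) (hM : M.PosDef) (hD : D.PosDef)
    (α β : ℝ) (hα : 0 < α) (hαβ : α < β)
    (hspec : (β • D - M).PosSemidef)
    (k : ℕ)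
    (c₂ : ℝ) (hc₂ : c₂ = (1 - 1 / (Polynomial.Chebyshev.T ℝ (k + 1)).eval ((β + α) / (β - α)))⁻¹) :
    (chebJacobiPrecond M D α β k - (c₂ * β)⁻¹ • D⁻¹).PosSemidef := by
  classical
  have hβ0 : (0:ℝ) < β := lt_trans hα hαβ
  -- square root of D
  set R := (open scoped MatrixOrder in CFC.sqrt D) with hR_def
  have hRR : R * R = D := open scoped MatrixOrder in CFC.sqrt_mul_sqrt_self D hD.posSemidef.nonneg
  have hRherm : R.IsHermitian := open scoped MatrixOrder in (CFC.sqrt_nonneg D).posSemidef.1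
  have hRdet : IsUnit R.det := by
    have hdet : R.det * R.det = D.det := by rw [← det_mul, hRR]
    refine isUnit_iff_ne_zero.mpr fun h => ?_
    rw [h, mul_zero] at hdet
    exact hD.det_pos.ne' hdet.symm
  set S := R⁻¹ with hS_def
  have hRS : R * S = 1 := mul_nonsing_inv R hRdet
  have hSR : S * R = 1 := nonsing_inv_mul R hRdet
  have hSherm : S.IsHermitian := hRherm.inv
  -- assoc-friendly cancellation lemmas
  have hRS' : ∀ X : Matrix n n ℝ, R * (S * X) = X := fun X => by
    rw [← Matrix.mul_assoc, hRS, Matrix.one_mul]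
  have hSR' : ∀ X : Matrix n n ℝ, S * (R * X) = X := fun X => by
    rw [← Matrix.mul_assoc, hSR, Matrix.one_mul]
  -- the symmetrized matrix A
  set A := S * M * S with hA_def
  have hApos : A.PosDef := by
    have hSMS : A = S * M * Sᴴ := by rw [hSherm.eq]
    rw [hSMS]
    refine Matrix.PosDef.of_dotProduct_mulVec_pos ?_ fun x hx => ?_
    · have := hM.posSemidef.mul_mul_conjTranspose_same S
      exact this.1
    · rw [← Matrix.mulVec_mulVec, ← Matrix.mulVec_mulVec]
      rw [Matrix.dotProduct_mulVec (star x) S]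
      have hy : star (Sᴴ *ᵥ x) = star x ᵥ* S := by
        rw [Matrix.star_mulVec, conjTranspose_conjTranspose]
      have hyne : Sᴴ *ᵥ x ≠ 0 := by
        intro h0
        apply hx
        have h3 : Rᴴ *ᵥ (Sᴴ *ᵥ x) = x := by
          rw [Matrix.mulVec_mulVec, ← Matrix.conjTranspose_mul, hSR,
            Matrix.conjTranspose_one, Matrix.one_mulVec]
        rw [h0, Matrix.mulVec_zero] at h3
        exact h3.symm
      rw [← hy]
      exact hM.dotProduct_mulVec_pos hyne
  have hherm : A.IsHermitian := hApos.1
  set e : n → ℝ := hherm.eigenvalues with he_def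
  have hepos : ∀ i, 0 < e i := fun i => hApos.eigenvalues_pos i
  set U : Matrix n n ℝ := (hherm.eigenvectorUnitary : Matrix n n ℝ) with hU_def
  have hUU : U * star U = 1 :=
    Matrix.mem_unitaryGroup_iff.mp hherm.eigenvectorUnitary.2
  have hsUU : star U * U = 1 :=
    Matrix.mem_unitaryGroup_iff'.mp hherm.eigenvectorUnitary.2
  have hUU' : ∀ X : Matrix n n ℝ, U * (star U * X) = X := fun X => by
    rw [← Matrix.mul_assoc, hUU, Matrix.one_mul]
  have hsUU' : ∀ X : Matrix n n ℝ, star U * (U * X) = X := fun X => by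
    rw [← Matrix.mul_assoc, hsUU, Matrix.one_mul]
  have hAspec : A = U * Matrix.diagonal e * star U := by
    have h := hherm.spectral_theorem
    rwa [Unitary.conjStarAlgAut_apply,
      show (RCLike.ofReal ∘ hherm.eigenvalues : n → ℝ) = e by
      funext i; simp [RCLike.ofReal_real_eq_id]; rfl] at h
  -- β • 1 - A is PSD
  have hb1A : (β • (1 : Matrix n n ℝ) - A).PosSemidef := by
    have heq : β • (1 : Matrix n n ℝ) - A = S * (β • D - M) * Sᴴ := by
      rw [hSherm.eq, hA_def, Matrix.mul_sub, Matrix.sub_mul]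
      congr 1
      rw [Matrix.mul_smul, Matrix.smul_mul, ← hRR]
      rw [show S * (R * R) * S = S * (R * (R * S)) by simp only [Matrix.mul_assoc]]
      rw [hRS, Matrix.mul_one, hSR]
    rw [heq]
    exact hspec.mul_mul_conjTranspose_same S
  -- eigenvalue upper bound
  have hele : ∀ i, e i ≤ β := by
    intro i
    have hv := hherm.mulVec_eigenvectorBasis i
    set v : n → ℝ := ⇑(hherm.eigenvectorBasis i) with hv_def
    have hvne : v ≠ 0 := (WithLp.ofLp_eq_zero (p := 2)).not.mpr (hherm.eigenvectorBasis.orthonormal.ne_zero i)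
    have ht0 : 0 < v ⬝ᵥ v := by
      have h1 : 0 < star v ⬝ᵥ (A *ᵥ v) := hApos.dotProduct_mulVec_pos hvne
      rw [hv, star_trivial] at h1
      simp only [dotProduct_smul, smul_eq_mul] at h1
      nlinarith [hepos i, h1]
    have h2 : 0 ≤ star v ⬝ᵥ ((β • (1 : Matrix n n ℝ) - A) *ᵥ v) := hb1A.dotProduct_mulVec_nonneg v
    rw [Matrix.sub_mulVec, Matrix.smul_mulVec, Matrix.one_mulVec, hv,
      star_trivial, dotProduct_sub] at h2
    simp only [dotProduct_smul, smul_eq_mul] at h2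
    nlinarith
  -- notation
  set τ : n → ℝ := fun i => (Ttilde α β k).eval (e i) with hτ_def
  set ι : n → ℝ := fun i => (e i)⁻¹ with hι_def
  set c : ℝ := (c₂ * β)⁻¹ with hc_def
  set g : n → ℝ := fun i => (1 - τ i) * ι i - c with hg_def
  -- structural decompositions
  have hDinv : D⁻¹ = S * S := by rw [← hRR, Matrix.mul_inv_rev]
  have hDiM : D⁻¹ * M = S * A * R := by
    rw [hDinv, hA_def]
    simp only [Matrix.mul_assoc, hSR, Matrix.mul_one]
  have hMRAR : R * A * R = M := by
    rw [hA_def]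
    simp only [Matrix.mul_assoc, hSR, Matrix.mul_one, hRS']
  have hAinv : A⁻¹ = U * Matrix.diagonal ι * star U := by
    apply Matrix.inv_eq_left_inv
    rw [hAspec]
    simp only [Matrix.mul_assoc, hsUU']
    rw [show Matrix.diagonal ι * (Matrix.diagonal e * star U)
        = Matrix.diagonal (fun i => ι i * e i) * star U from by
      rw [← Matrix.mul_assoc, Matrix.diagonal_mul_diagonal]]
    rw [show (fun i => ι i * e i) = fun _ => (1:ℝ) from
      funext fun i => inv_mul_cancel₀ (hepos i).ne', Matrix.diagonal_one, Matrix.one_mul]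
    exact hUU
  have hMinv : M⁻¹ = S * (A⁻¹ * S) := by
    rw [← hMRAR, Matrix.mul_inv_rev, Matrix.mul_inv_rev]
  have haev : Polynomial.aeval (D⁻¹ * M) (Ttilde α β k)
      = S * (U * Matrix.diagonal τ * star U) * R := by
    rw [hDiM, aeval_conj_mat S R A hSR hRS, hAspec,
      aeval_conj_mat U (star U) (Matrix.diagonal e) hUU hsUU, aeval_diagonal_mat]
  -- key identity
  have key : chebJacobiPrecond M D α β k - c • D⁻¹
      = (S * U) * Matrix.diagonal g * (S * U)ᴴ := by
    have hSUt : (S * U)ᴴ = star U * S := by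
      rw [Matrix.conjTranspose_mul, ← Matrix.star_eq_conjTranspose, hSherm.eq]
    have hgdiag : Matrix.diagonal g
        = Matrix.diagonal ι - Matrix.diagonal τ * Matrix.diagonal ι - c • 1 := by
      rw [Matrix.diagonal_mul_diagonal]
      ext i j
      rcases eq_or_ne i j with rfl | hne
      · simp only [Matrix.sub_apply, Matrix.smul_apply, Matrix.diagonal_apply_eq,
          Matrix.one_apply_eq, smul_eq_mul, hg_def]
        ring
      · simp [Matrix.diagonal_apply_ne _ hne, Matrix.one_apply_ne hne]
    rw [chebJacobiPrecond, haev, hMinv, hAinv, hDinv, hSUt, hgdiag]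
    simp only [Matrix.mul_sub, Matrix.sub_mul, Matrix.mul_one, Matrix.one_mul,
      Matrix.mul_smul, Matrix.smul_mul, smul_mul_assoc, mul_smul_comm,
      Matrix.mul_assoc, hSR', hRS', hUU', hsUU']
  rw [key]
  refine Matrix.PosSemidef.mul_mul_conjTranspose_same ?_ (S * U)
  refine Matrix.posSemidef_diagonal_iff.mpr fun i => ?_
  have hkey := scalar_key α β hα hαβ k (e i) (hepos i) (hele i)
  simp only [hg_def, hτ_def, hι_def, hc_def]
  rw [hc₂, mul_inv, inv_inv, ← div_eq_mul_inv]
  exact sub_nonneg.mpr hkey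
end

section
/- Let 0 < α < β be reals, k ∈ ℕ, and s̄ = (β+α)/(β−α). Then the maximum of the function t ↦ 1 − T̃_{k+1}(t) over the interval [0, β] is exactly 1 + 1/C_{k+1}(s̄); that is, 1 + 1/C_{k+1}(s̄) is the greatest element of the set {1 − T̃_{k+1}(t) : t ∈ [0, β]}. (This is the identity max_{λ∈[0,β]} s_k(λ)·λ = 1 + 1/C_{k+1}(s̄) used in the proof of Lemma 1.) -/
open Polynomial

lemma T_eval_ge_aux (x : ℝ) (hx : 1 ≤ x) : ∀ m : ℕ,
    1 ≤ (Polynomial.Chebyshev.T ℝ m).eval x ∧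
    (Polynomial.Chebyshev.T ℝ m).eval x ≤ (Polynomial.Chebyshev.T ℝ (m + 1)).eval x := by
  intro m
  induction m with
  | zero => simp [Polynomial.Chebyshev.T_zero, Polynomial.Chebyshev.T_one, hx]
  | succ n ih =>
    obtain ⟨h1, h2⟩ := ih
    have h3 : (1 : ℝ) ≤ (Polynomial.Chebyshev.T ℝ (n + 1)).eval x := le_trans h1 h2
    constructor
    · exact h3
    · have hrec := Polynomial.Chebyshev.T_add_two ℝ (n : ℤ)
      have : (Polynomial.Chebyshev.T ℝ ((n : ℤ) + 2)).eval x =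
          2 * x * (Polynomial.Chebyshev.T ℝ ((n : ℤ) + 1)).eval x -
          (Polynomial.Chebyshev.T ℝ (n : ℤ)).eval x := by
        rw [hrec]; simp
      push_cast
      have hcast : ((n : ℤ) + 1 + 1) = ((n : ℤ) + 2) := by ring
      rw [hcast, this]
      nlinarith [h3, h1, h2]

lemma one_le_T_eval (x : ℝ) (hx : 1 ≤ x) (m : ℕ) :
    1 ≤ (Polynomial.Chebyshev.T ℝ m).eval x := (T_eval_ge_aux x hx m).1

lemma neg_one_le_T_eval (x : ℝ) (hx : -1 ≤ x) (m : ℕ) :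
    -1 ≤ (Polynomial.Chebyshev.T ℝ m).eval x := by
  rcases le_or_gt x 1 with h | h
  · obtain ⟨θ, _, hθ⟩ := Real.surjOn_cos ⟨hx, h⟩
    rw [← hθ, Polynomial.Chebyshev.T_real_cos]
    exact Real.neg_one_le_cos _
  · linarith [one_le_T_eval x h.le m]

theorem stmt5 (α β : ℝ) (hα : 0 < α) (hαβ : α < β) (k : ℕ) :
    IsGreatest ((fun t => 1 - (Ttilde α β k).eval t) '' Set.Icc (0 : ℝ) β)
      (1 + 1 / (Polynomial.Chebyshev.T ℝ (k + 1)).eval ((β + α) / (β - α))) := by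
  have hβα : (0 : ℝ) < β - α := by linarith
  set s : ℝ := (β + α) / (β - α) with hs
  have hs1 : 1 ≤ s := by
    rw [hs, le_div_iff₀ hβα]; linarith
  have hidx : ((k : ℤ) + 1) = ((k + 1 : ℕ) : ℤ) := by push_cast; ring
  have hCs : 1 ≤ (Polynomial.Chebyshev.T ℝ ((k : ℤ) + 1)).eval s := by
    rw [hidx]; exact one_le_T_eval s hs1 (k + 1)
  have hCspos : 0 < (Polynomial.Chebyshev.T ℝ ((k : ℤ) + 1)).eval s := by linarith
  have heval : ∀ t : ℝ, (Ttilde α β k).eval t =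
      ((Polynomial.Chebyshev.T ℝ ((k : ℤ) + 1)).eval s)⁻¹ *
        (Polynomial.Chebyshev.T ℝ ((k : ℤ) + 1)).eval (s - 2 / (β - α) * t) := by
    intro t
    simp [Ttilde, Polynomial.eval_comp, hs]
  constructor
  · -- membership: take t₀ with argument cos(π/(k+1))
    set θ : ℝ := Real.pi / (k + 1) with hθ
    set x : ℝ := Real.cos θ with hx
    have hx1 : -1 ≤ x ∧ x ≤ 1 := ⟨Real.neg_one_le_cos θ, Real.cos_le_one θ⟩
    set t₀ : ℝ := ((β + α) - (β - α) * x) / 2 with ht₀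
    refine ⟨t₀, ⟨?_, ?_⟩, ?_⟩
    · rw [ht₀]; nlinarith [hx1.2]
    · rw [ht₀]; nlinarith [hx1.1]
    · have harg : s - 2 / (β - α) * t₀ = x := by
        rw [ht₀, hs]; field_simp; ring
      have hTx : (Polynomial.Chebyshev.T ℝ ((k : ℤ) + 1)).eval x = -1 := by
        rw [hx, Polynomial.Chebyshev.T_real_cos, hθ]
        have hk1 : ((k : ℝ) + 1) ≠ 0 := by positivity
        push_cast
        rw [mul_div_cancel₀ _ hk1, Real.cos_pi]
      simp only [heval, harg, hTx]
      field_simp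
      ring
  · -- upper bound
    rintro y ⟨t, ⟨ht0, htβ⟩, rfl⟩
    simp only [heval]
    have harg_ge : -1 ≤ s - 2 / (β - α) * t := by
      rw [hs]
      rw [div_mul_eq_mul_div, ← sub_div, le_div_iff₀ hβα]  -- may fail; fallback below
      nlinarith
    have hT_ge : -1 ≤ (Polynomial.Chebyshev.T ℝ ((k : ℤ) + 1)).eval (s - 2 / (β - α) * t) := by
      rw [hidx]; exact neg_one_le_T_eval _ harg_ge (k + 1)
    have h1 : -((Polynomial.Chebyshev.T ℝ ((k : ℤ) + 1)).eval s)⁻¹ ≤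
        ((Polynomial.Chebyshev.T ℝ ((k : ℤ) + 1)).eval s)⁻¹ *
          (Polynomial.Chebyshev.T ℝ ((k : ℤ) + 1)).eval (s - 2 / (β - α) * t) := by
      have := mul_le_mul_of_nonneg_left hT_ge (le_of_lt (inv_pos.mpr hCspos))
      linarith [this]
    rw [one_div]
    linarith
end

section
/- Let 0 < α < β be reals, k ∈ ℕ, and s̄ = (β+α)/(β−α). Then for every t ∈ [0, β] one has 1 − T̃_{k+1}(t) ≥ (t/β)·(1 − 1/C_{k+1}(s̄)). (This is the bound min_{λ∈[0,β]} s_k(λ) ≥ (1/β)(1 − 1/C_{k+1}(s̄)) used in the proof of Lemma 1.) -/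
open Polynomial

/-!
Substituting `x = s̄ - 2t/(β-α)` maps `[0, β]` onto `[-1, s̄]` and turns `t/β` into
`(s̄ - x)/(s̄ + 1)`, so the claim says that `C_{k+1}` lies below its chord from `(-1, 1)` to
`(s̄, C_{k+1}(s̄))`. On `[-1, 1]` this holds because `|C_n| ≤ 1 ≤ C_n(s̄)`; on `[1, s̄]` because
`C_n` is convex on `[1, ∞)`. The convexity follows by induction from
`C_{n+2} - C_{n+1} = (C_{n+1} - C_n) + 2(x - 1) C_{n+1}`: on `[1, ∞)` both `C_n` and
`C_{n+1} - C_n` are convex, monotone and nonnegative, a class closed under sums and products.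
-/

open Set

section ConvexMonotoneNonneg

variable {𝕜 : Type*} [Field 𝕜] [LinearOrder 𝕜] [IsStrictOrderedRing 𝕜] {s : Set 𝕜}
  {f g : 𝕜 → 𝕜}

def ConvexMonotoneNonnegOn (s : Set 𝕜) (f : 𝕜 → 𝕜) : Prop :=
  ConvexOn 𝕜 s f ∧ MonotoneOn f s ∧ ∀ x ∈ s, 0 ≤ f x

namespace ConvexMonotoneNonnegOn

lemma add (hf : ConvexMonotoneNonnegOn s f) (hg : ConvexMonotoneNonnegOn s g) :
    ConvexMonotoneNonnegOn s (f + g) :=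
  ⟨hf.1.add hg.1, hf.2.1.add hg.2.1, fun x hx => add_nonneg (hf.2.2 x hx) (hg.2.2 x hx)⟩

lemma mul (hf : ConvexMonotoneNonnegOn s f) (hg : ConvexMonotoneNonnegOn s g) :
    ConvexMonotoneNonnegOn s (f * g) :=
  ⟨hf.1.mul hg.1 (fun x hx => hf.2.2 x hx) (fun x hx => hg.2.2 x hx) (hf.2.1.monovaryOn hg.2.1),
    hf.2.1.mul hg.2.1 hf.2.2 hg.2.2, fun x hx => mul_nonneg (hf.2.2 x hx) (hg.2.2 x hx)⟩

end ConvexMonotoneNonnegOn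

lemma convexMonotoneNonnegOn_Ici_mul_sub {a b : 𝕜} (ha : 0 ≤ a) :
    ConvexMonotoneNonnegOn (Ici b) (fun x => a * (x - b)) := by
  refine ⟨⟨convex_Ici b, fun x _ y _ p q _ _ hpq => le_of_eq ?_⟩, ?_, ?_⟩
  · simp only [smul_eq_mul]
    linear_combination (a * b) * hpq
  · exact fun x _ y _ hxy => by dsimp only; gcongr
  · exact fun x hx => mul_nonneg ha (sub_nonneg.2 hx)

end ConvexMonotoneNonneg

namespace Polynomial.Chebyshev

lemma eval_T_real_add_two_sub (n : ℤ) (x : ℝ) :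
    (T ℝ (n + 2)).eval x - (T ℝ (n + 1)).eval x =
      ((T ℝ (n + 1)).eval x - (T ℝ n).eval x) + 2 * (x - 1) * (T ℝ (n + 1)).eval x := by
  rw [T_add_two]
  simp only [eval_sub, eval_mul, eval_ofNat, eval_X]
  ring

lemma convexMonotoneNonnegOn_T_real (n : ℕ) :
    ConvexMonotoneNonnegOn (Ici 1) (fun x => (T ℝ n).eval x) ∧
      ConvexMonotoneNonnegOn (Ici 1) (fun x => (T ℝ (n + 1)).eval x - (T ℝ n).eval x) := by
  induction n with
  | zero =>
    refine ⟨?_, ?_⟩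
    · simp only [Nat.cast_zero, T_zero, eval_one]
      exact ⟨convexOn_const 1 (convex_Ici 1), monotoneOn_const, fun _ _ => zero_le_one⟩
    · simpa using convexMonotoneNonnegOn_Ici_mul_sub (a := (1 : ℝ)) (b := 1) zero_le_one
  | succ n ih =>
    obtain ⟨hT, hD⟩ := ih
    have hT' : ConvexMonotoneNonnegOn (Ici 1) (fun x => (T ℝ (n + 1)).eval x) := by
      convert hT.add hD using 1
      funext x
      simp only [Pi.add_apply]
      ring
    refine ⟨by exact_mod_cast hT', ?_⟩
    have hD' := hD.add ((convexMonotoneNonnegOn_Ici_mul_sub (b := (1 : ℝ)) zero_le_two).mul hT')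
    push_cast
    convert hD' using 1
    funext x
    simp only [Pi.add_apply, Pi.mul_apply, ← eval_T_real_add_two_sub, add_assoc, one_add_one_eq_two]

lemma convexOn_eval_T_real (n : ℤ) : ConvexOn ℝ (Ici 1) (fun x => (T ℝ n).eval x) := by
  simpa only [T_natAbs] using (convexMonotoneNonnegOn_T_real n.natAbs).1.1

lemma eval_T_real_le_chord (n : ℤ) {s x : ℝ} (hs : 1 ≤ s) (hx : x ∈ Icc (-1) s) :
    (T ℝ n).eval x ≤ 1 + (x + 1) / (s + 1) * ((T ℝ n).eval s - 1) := by
  have hTs := one_le_eval_T_real n hs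
  rcases le_or_gt x 1 with hx1 | hx1
  · have hTx := (eval_T_real_mem_Icc n ⟨hx.1, hx1⟩).2
    have hw : 0 ≤ (x + 1) / (s + 1) := div_nonneg (by linarith [hx.1]) (by linarith)
    nlinarith
  · have hsecant := (convexOn_eval_T_real n).secant_mono self_mem_Ici hx1.le (hx1.le.trans hx.2)
      hx1.ne' (hx1.trans_le hx.2).ne' hx.2
    simp only [T_eval_one] at hsecant
    have hslope : (x - 1) / (s - 1) ≤ (x + 1) / (s + 1) := by
      rw [div_le_div_iff₀ (by linarith [hx.2]) (by linarith)]
      nlinarith [hx.2]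
    calc (T ℝ n).eval x
        = 1 + (x - 1) * (((T ℝ n).eval x - 1) / (x - 1)) := by field_simp; ring
      _ ≤ 1 + (x - 1) * (((T ℝ n).eval s - 1) / (s - 1)) := by gcongr
      _ = 1 + (x - 1) / (s - 1) * ((T ℝ n).eval s - 1) := by ring
      _ ≤ 1 + (x + 1) / (s + 1) * ((T ℝ n).eval s - 1) := by gcongr

lemma inv_mul_eval_T_real_le_chord (n : ℤ) {s x : ℝ} (hs : 1 ≤ s) (hx : x ∈ Icc (-1) s) :
    ((T ℝ n).eval s)⁻¹ * (T ℝ n).eval x ≤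
      1 - (1 - (x + 1) / (s + 1)) * (1 - 1 / (T ℝ n).eval s) := by
  have hc : 0 < (T ℝ n).eval s := zero_lt_one.trans_le (one_le_eval_T_real n hs)
  rw [inv_mul_le_iff₀ hc]
  calc (T ℝ n).eval x ≤ 1 + (x + 1) / (s + 1) * ((T ℝ n).eval s - 1) :=
        eval_T_real_le_chord n hs hx
    _ = (T ℝ n).eval s * (1 - (1 - (x + 1) / (s + 1)) * (1 - 1 / (T ℝ n).eval s)) := by
        field_simp
        ring

end Polynomial.Chebyshev

lemma eval_Ttilde (α β : ℝ) (k : ℕ) (t : ℝ) :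
    (Ttilde α β k).eval t =
      ((Chebyshev.T ℝ (k + 1)).eval ((β + α) / (β - α)))⁻¹ *
        (Chebyshev.T ℝ (k + 1)).eval ((β + α) / (β - α) - 2 / (β - α) * t) := by
  simp [Ttilde]

theorem stmt6 (α β : ℝ) (hα : 0 < α) (hαβ : α < β) (k : ℕ) :
    ∀ t ∈ Set.Icc (0 : ℝ) β,
      1 - (Ttilde α β k).eval t ≥
        (t / β) * (1 - 1 / (Polynomial.Chebyshev.T ℝ (k + 1)).eval ((β + α) / (β - α))) := by
  rintro t ⟨ht0, htβ⟩
  have hβα : 0 < β - α := sub_pos.2 hαβ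
  set s := (β + α) / (β - α) with hs_def
  set x := s - 2 / (β - α) * t with hx_def
  have hs : 1 ≤ s := by rw [hs_def, le_div_iff₀ hβα]; linarith
  have hx : x ∈ Icc (-1) s := by
    constructor
    · rw [hx_def, hs_def, ← sub_nonneg]
      field_simp
      linarith
    · have : 0 ≤ 2 / (β - α) * t := by positivity
      linarith
  have hweight : t / β = 1 - (x + 1) / (s + 1) := by
    have hs1 : s + 1 = 2 * β / (β - α) := by rw [hs_def]; field_simp; ring
    have hβ : β ≠ 0 := by linarith
    calc t / β = 2 / (β - α) * t / (2 * β / (β - α)) := by field_simp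
      _ = (s - x) / (s + 1) := by rw [hs1, hx_def]; ring
      _ = 1 - (x + 1) / (s + 1) := by field_simp [hs1]; ring
  rw [eval_Ttilde, ← hs_def, ← hx_def, hweight, ge_iff_le]
  linarith [Chebyshev.inv_mul_eval_T_real_le_chord (k + 1) hs hx]
end

section
/- For every odd natural number m ≥ 1, the smoothing-rate function η₀(m) = 2^{−m}·binom(m, ⌊(m+1)/2⌋) satisfies 2^{−m}·binom(m, (m+1)/2) ≤ √(2/(π·(m+1))). -/
/-! Writing `m = 2k + 1`, the quantity `binom(2k+1, k+1) / 2^(2k+1)` is read off the `k`-th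
partial Wallis product `W k`, and the claimed bound is then exactly Wallis' lower estimate
`(2k+1)/(2k+2) · π/2 ≤ W k`, which comes from comparing `∫₀^π sin^(2k+1)` with `∫₀^π sin^(2k)`. -/

open Real Nat

namespace Real.Wallis

theorem W_eq_choose (k : ℕ) :
    W k = (2 * k + 1) * 2 ^ (4 * k) / ((k + 1) ^ 2 * ((2 * k + 1).choose (k + 1) : ℝ) ^ 2) := by
  have hchoose :
      ((2 * k + 1).choose (k + 1) : ℝ) * ((k + 1) * k !) * k ! = (2 * k + 1) * (2 * k)! := by
    have := Nat.choose_mul_factorial_mul_factorial (show k + 1 ≤ 2 * k + 1 by omega)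
    rw [show 2 * k + 1 - (k + 1) = k by omega, factorial_succ, factorial_succ] at this
    exact_mod_cast this
  have hpos : (0 : ℝ) < (2 * k + 1).choose (k + 1) := by exact_mod_cast choose_pos (by omega)
  rw [W_eq_factorial_ratio, div_eq_div_iff (by positivity) (by positivity)]
  linear_combination 2 ^ (4 * k) *
    (((2 * k + 1).choose (k + 1) : ℝ) * ((k + 1) * k !) * k ! + (2 * k + 1) * (2 * k)!) * hchoose

theorem sq_choose_div_two_pow_le (k : ℕ) :
    (((2 * k + 1).choose (k + 1) : ℝ) / 2 ^ (2 * k + 1)) ^ 2 ≤ 1 / (π * (k + 1)) := by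
  have hpos : (0 : ℝ) < (2 * k + 1).choose (k + 1) := by exact_mod_cast choose_pos (by omega)
  have hW := le_W k
  rw [W_eq_choose, div_mul_eq_mul_div, div_le_div_iff₀ (by positivity) (by positivity)] at hW
  have hpow : ((2 : ℝ) ^ (2 * k + 1)) ^ 2 = 4 * 2 ^ (4 * k) := by ring
  rw [div_pow, hpow, div_le_div_iff₀ (by positivity) (by positivity)]
  have : 0 < (2 * k + 1 : ℝ) * (k + 1) := by positivity
  nlinarith

end Real.Wallis

theorem stmt11_general (m : ℕ) (hmo : Odd m) :
    (m.choose ((m + 1) / 2) : ℝ) / 2 ^ m ≤ Real.sqrt (2 / (Real.pi * (m + 1))) := by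
  obtain ⟨k, rfl⟩ := hmo
  rw [show (2 * k + 1 + 1) / 2 = k + 1 by omega, Real.le_sqrt (by positivity) (by positivity)]
  convert Real.Wallis.sq_choose_div_two_pow_le k using 1
  push_cast
  field_simp
  ring

theorem stmt11 (m : ℕ) (hm : 1 ≤ m) (hmo : Odd m) :
    (m.choose ((m + 1) / 2) : ℝ) / 2 ^ m ≤ Real.sqrt (2 / (Real.pi * (m + 1))) :=
  stmt11_general m hmo
end

section
/- Let A be a real symmetric positive semidefinite n×n matrix (n finite) such that every row of A has at most N nonzero entries, i.e., for each index i the set {j : A i j ≠ 0} has cardinality at most N. Then A ⪯ N·diag(A) in the Loewner order; equivalently, for every vector x ∈ ℝⁿ, xᵀ A x ≤ N · Σᵢ A i i · (x i)². In particular λ_max((diag A)⁻¹ A) ≤ N whenever diag(A) is positive definite. (This is the sparsity bound A ≤ c·D_A used for the estimate λ_max(D_A⁻¹ A) ≤ c.) -/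
open Matrix

lemma key_ineq {n : Type*} [Fintype n] [DecidableEq n]
    (A : Matrix n n ℝ) (hA : A.PosSemidef) (x : n → ℝ) (i j : n) :
    x i * (A i j * x j) ≤ (A i i * (x i * x i) + A j j * (x j * x j)) / 2 := by
  have h := hA.dotProduct_mulVec_nonneg (Pi.single i (x i) - Pi.single j (x j))
  have hsym : A j i = A i j := by
    have := hA.1
    rw [Matrix.IsHermitian] at this
    conv_lhs => rw [← this]
    simp [Matrix.transpose_apply]
  simp only [star_trivial, dotProduct, mulVec, Pi.sub_apply, Pi.single_apply, mul_sub,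
    Finset.sum_sub_distrib, mul_ite, mul_zero, ite_mul, zero_mul, sub_mul,
    Finset.sum_ite_eq', Finset.mem_univ, if_true] at h
  rw [hsym] at h
  linarith

lemma diag_nonneg' {n : Type*} [Fintype n] [DecidableEq n]
    (A : Matrix n n ℝ) (hA : A.PosSemidef) (i : n) : 0 ≤ A i i := by
  have h := hA.dotProduct_mulVec_nonneg (Pi.single i 1)
  simpa [dotProduct, mulVec, Pi.single_apply, mul_ite, ite_mul,
    Finset.sum_ite_eq', Finset.mem_univ] using h

theorem stmt12 {n : Type*} [Fintype n] [DecidableEq n]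
    (A : Matrix n n ℝ) (hA : A.PosSemidef) (N : ℕ)
    (hsparse : ∀ i, (Finset.univ.filter (fun j => A i j ≠ 0)).card ≤ N) :
    ((N : ℝ) • Matrix.diagonal (fun i => A i i) - A).PosSemidef := by
  have hsym : ∀ i j, A j i = A i j := fun i j => by
    have := hA.1
    rw [Matrix.IsHermitian] at this
    conv_lhs => rw [← this]
    simp [Matrix.transpose_apply]
  rw [posSemidef_iff_dotProduct_mulVec]
  constructor
  · refine IsHermitian.sub ?_ hA.1
    simp [Matrix.IsHermitian, Matrix.conjTranspose_smul, Matrix.diagonal_conjTranspose,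
      Function.comp]
  intro x
  simp only [star_trivial, sub_mulVec, dotProduct_sub, smul_mulVec, dotProduct_smul]
  rw [sub_nonneg]
  have hdiag : x ⬝ᵥ (Matrix.diagonal (fun i => A i i) *ᵥ x) = ∑ i, A i i * (x i * x i) := by
    simp only [dotProduct, mulVec_diagonal]
    exact Finset.sum_congr rfl fun i _ => by ring
  have hAx : x ⬝ᵥ (A *ᵥ x) = ∑ i, ∑ j, x i * (A i j * x j) := by
    simp [dotProduct, mulVec, Finset.mul_sum]
  rw [hAx]
  set F : n → Finset n := fun i => Finset.univ.filter (fun j => A i j ≠ 0) with hF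
  have hrestrict : ∀ i, ∑ j, x i * (A i j * x j) = ∑ j ∈ F i, x i * (A i j * x j) := by
    intro i
    rw [eq_comm]
    apply Finset.sum_subset (Finset.filter_subset _ _)
    intro j _ hj
    simp only [hF, Finset.mem_filter, Finset.mem_univ, true_and, not_not] at hj
    simp [hj]
  calc ∑ i, ∑ j, x i * (A i j * x j)
      = ∑ i, ∑ j ∈ F i, x i * (A i j * x j) := by
        exact Finset.sum_congr rfl fun i _ => hrestrict i
    _ ≤ ∑ i, ∑ j ∈ F i, (A i i * (x i * x i) + A j j * (x j * x j)) / 2 := by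
        refine Finset.sum_le_sum fun i _ => Finset.sum_le_sum fun j _ => ?_
        exact key_ineq A hA x i j
    _ = (∑ i, ∑ j ∈ F i, A i i * (x i * x i)) / 2
        + (∑ i, ∑ j ∈ F i, A j j * (x j * x j)) / 2 := by
        simp only [add_div, Finset.sum_add_distrib, Finset.sum_div]
    _ ≤ (N : ℝ) * ∑ i, A i i * (x i * x i) := by
        have hterm : ∀ i, (0:ℝ) ≤ A i i * (x i * x i) :=
          fun i => mul_nonneg (diag_nonneg' A hA i) (mul_self_nonneg _)
        have hbound : ∀ i, ∑ j ∈ F i, A i i * (x i * x i) ≤ (N : ℝ) * (A i i * (x i * x i)) := by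
          intro i
          rw [Finset.sum_const, nsmul_eq_mul]
          exact mul_le_mul_of_nonneg_right (Nat.cast_le.mpr (hsparse i)) (hterm i)
        have hswap : ∑ i, ∑ j ∈ F i, A j j * (x j * x j)
            = ∑ j, ∑ i ∈ F j, A j j * (x j * x j) := by
          refine Finset.sum_comm' ?_
          intro i j
          simp only [hF, Finset.mem_filter, Finset.mem_univ, true_and, and_comm]
          rw [hsym i j]
        have h1 : (∑ i, ∑ j ∈ F i, A i i * (x i * x i)) ≤ (N : ℝ) * ∑ i, A i i * (x i * x i) := by
          rw [Finset.mul_sum]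
          exact Finset.sum_le_sum fun i _ => hbound i
        have h2 : (∑ i, ∑ j ∈ F i, A j j * (x j * x j)) ≤ (N : ℝ) * ∑ i, A i i * (x i * x i) := by
          rw [hswap, Finset.mul_sum]
          exact Finset.sum_le_sum fun j _ => hbound j
        linarith
    _ = (N : ℝ) * (x ⬝ᵥ (Matrix.diagonal (fun i => A i i) *ᵥ x)) := by rw [hdiag]
end

section
/- Let M and D be real symmetric positive definite n×n matrices and β > 0 with M ⪯ β·D. Fix k ∈ ℕ, set α = β/2 (so s̄ = (β+α)/(β−α) = 3) and σ = C_{k+1}(3)/(1 + C_{k+1}(3)). Then the scaled Chebyshev–Jacobi preconditioner satisfies σ·P ⪯ M⁻¹ in the Loewner order, where P = (I − T̃_{k+1}(D⁻¹M)) M⁻¹; equivalently, the matrix Â defined by Â⁻¹ = σ·P satisfies Â ⪰ M. (This is the scaling guarantee of Algorithm 2 ensuring Â ≥ A and Ŝ ≥ S̃.) -/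
open Polynomial Matrix

set_option linter.unusedSectionVars false
set_option linter.unnecessarySimpa false
set_option maxHeartbeats 1000000

lemma cheb_pair (x : ℝ) (hx : 1 ≤ x) : ∀ m : ℕ,
    1 ≤ (Chebyshev.T ℝ m).eval x ∧
      (Chebyshev.T ℝ m).eval x ≤ (Chebyshev.T ℝ (m + 1)).eval x := by
  intro m
  induction m with
  | zero => simp [Polynomial.Chebyshev.T_zero, Polynomial.Chebyshev.T_one, hx]
  | succ m ih =>
    obtain ⟨h1, h2⟩ := ih
    have key : (Chebyshev.T ℝ ((m : ℤ) + 1 + 1)).eval x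
        = 2 * x * (Chebyshev.T ℝ ((m : ℤ) + 1)).eval x - (Chebyshev.T ℝ (m : ℤ)).eval x := by
      rw [show ((m : ℤ) + 1 + 1) = (m : ℤ) + 2 by ring, Polynomial.Chebyshev.T_add_two]; simp
    constructor
    · exact h1.trans h2
    · push_cast
      rw [key]
      nlinarith

lemma cheb_ge_one (m : ℕ) (x : ℝ) (hx : 1 ≤ x) : 1 ≤ (Chebyshev.T ℝ m).eval x :=
  (cheb_pair x hx m).1

lemma cheb_ge_neg_one (m : ℕ) (x : ℝ) (hx : -1 ≤ x) : -1 ≤ (Chebyshev.T ℝ m).eval x := by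
  rcases le_total x 1 with h | h
  · have := Real.cos_arccos hx h
    rw [← this, Polynomial.Chebyshev.T_real_cos]
    exact Real.neg_one_le_cos _
  · linarith [cheb_ge_one m x h]

section Matrices

variable {n : Type*} [Fintype n] [DecidableEq n]

lemma myConjPow (U V A : Matrix n n ℝ) (hUV : U * V = 1) (hVU : V * U = 1) (m : ℕ) :
    (U * A * V) ^ m = U * A ^ m * V := by
  induction m with
  | zero => simp [hUV]
  | succ m ih =>
    rw [pow_succ, ih, pow_succ]
    calc U * A ^ m * V * (U * A * V) = U * A ^ m * (V * U) * (A * V) := by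
          simp only [Matrix.mul_assoc]
    _ = U * (A ^ m * A) * V := by rw [hVU, Matrix.mul_one]; simp only [Matrix.mul_assoc]

lemma myAevalConj (U V A : Matrix n n ℝ) (hUV : U * V = 1) (hVU : V * U = 1) (p : ℝ[X]) :
    aeval (U * A * V) p = U * aeval A p * V := by
  induction p using Polynomial.induction_on' with
  | add p q hp hq => rw [map_add, map_add, hp, hq, Matrix.mul_add, Matrix.add_mul]
  | monomial m a =>
    rw [aeval_monomial, aeval_monomial, myConjPow U V A hUV hVU m,
      Algebra.algebraMap_eq_smul_one]
    simp only [smul_mul_assoc, one_mul, mul_smul_comm]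

lemma myAevalDiag (d : n → ℝ) (p : ℝ[X]) :
    aeval (diagonal d) p = diagonal (fun i => p.eval (d i)) := by
  rw [show (diagonal d : Matrix n n ℝ) = Matrix.diagonalAlgHom (n := n) (α := ℝ) ℝ d from rfl,
    aeval_algHom_apply]
  simp only [diagonalAlgHom_apply]
  have hfun : (aeval d p : n → ℝ) = fun i => p.eval (d i) := by
    funext i
    have h2 := aeval_algHom_apply (Pi.evalAlgHom ℝ (fun _ : n => ℝ) i) d p
    simpa using h2.symm
  rw [hfun]

lemma myPosSemidefSmul {A : Matrix n n ℝ} (hA : A.PosSemidef) {c : ℝ} (hc : 0 ≤ c) :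
    (c • A).PosSemidef := by
  refine ⟨?_, fun x => ?_⟩
  · unfold Matrix.IsHermitian
    rw [conjTranspose_smul, hA.1.eq]
    simp
  · exact (hA.smul hc).2 x

lemma myAevalPSD {A : Matrix n n ℝ} (hA : A.IsHermitian) (p : ℝ[X])
    (h : ∀ i, 0 ≤ p.eval (hA.eigenvalues i)) : (aeval A p).PosSemidef := by
  set U : Matrix n n ℝ := (hA.eigenvectorUnitary : Matrix n n ℝ) with hU
  have hUV : U * star U = 1 :=
    (Matrix.mem_unitaryGroup_iff).mp hA.eigenvectorUnitary.2
  have hVU : star U * U = 1 :=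
    (Matrix.mem_unitaryGroup_iff').mp hA.eigenvectorUnitary.2
  have hspec : A = U * diagonal hA.eigenvalues * star U := by
    have := hA.spectral_theorem
    simpa using this
  rw [hspec, myAevalConj U (star U) _ hUV hVU, myAevalDiag]
  have hd : (diagonal (fun i => p.eval (hA.eigenvalues i)) : Matrix n n ℝ).PosSemidef :=
    Matrix.posSemidef_diagonal_iff.mpr h
  have := hd.mul_mul_conjTranspose_same U
  simpa [Matrix.star_eq_conjTranspose, Matrix.mul_assoc] using this

lemma myEigLe {A : Matrix n n ℝ} (hA : A.IsHermitian)
    {β : ℝ} (h : (β • (1 : Matrix n n ℝ) - A).PosSemidef) (i : n) :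
    hA.eigenvalues i ≤ β := by
  set U : Matrix n n ℝ := (hA.eigenvectorUnitary : Matrix n n ℝ) with hU
  have hVU : star U * U = 1 := (Matrix.mem_unitaryGroup_iff').mp hA.eigenvectorUnitary.2
  have hdiag : star U * A * U = diagonal hA.eigenvalues := by
    simpa using hA.conjStarAlgAut_star_eigenvectorUnitary
  have h2 := h.conjTranspose_mul_mul_same U
  have e : Uᴴ * (β • (1 : Matrix n n ℝ) - A) * U
      = diagonal (fun j => β - hA.eigenvalues j) := by
    rw [Matrix.star_eq_conjTranspose] at hVU hdiag
    rw [Matrix.mul_sub, Matrix.sub_mul, Matrix.mul_smul, Matrix.mul_one, Matrix.smul_mul, hVU,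
      hdiag]
    rw [show (β • (1 : Matrix n n ℝ)) = diagonal (fun _ : n => β) from by
      ext i j
      rcases eq_or_ne i j with rfl | hij
      · simp
      · simp [Matrix.one_apply_ne hij, Matrix.diagonal_apply_ne _ hij], Matrix.diagonal_sub]
  rw [e] at h2
  have := Matrix.posSemidef_diagonal_iff.mp h2 i
  linarith

end Matrices

theorem stmt16 {n : Type*} [Fintype n] [DecidableEq n]
    (M D : Matrix n n ℝ) (hM : M.PosDef) (hD : D.PosDef)
    (β : ℝ) (hβ : 0 < β) (hspec : (β • D - M).PosSemidef) (k : ℕ)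
    (σ : ℝ)
    (hσ : σ = (Polynomial.Chebyshev.T ℝ (k + 1)).eval 3 /
      (1 + (Polynomial.Chebyshev.T ℝ (k + 1)).eval 3)) :
    (M⁻¹ - σ • chebJacobiPrecond M D (β / 2) β k).PosSemidef := by
  classical
  have hkey : ((k : ℤ) + 1) = ((k + 1 : ℕ) : ℤ) := by push_cast; ring
  set c : ℝ := (Polynomial.Chebyshev.T ℝ (k + 1)).eval 3 with hcdef
  have hc1 : 1 ≤ c := by
    rw [hcdef, hkey]; exact cheb_ge_one (k + 1) 3 (by norm_num)
  have hc0 : c ≠ 0 := by linarith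
  have h1c : (0:ℝ) < 1 + c := by linarith
  have h1c' : (1:ℝ) + c ≠ 0 := ne_of_gt h1c
  set q0 : ℝ[X] := (Polynomial.Chebyshev.T ℝ (k + 1)).comp
      (Polynomial.C 3 - Polynomial.C (4 / β) * Polynomial.X) with hq0
  have hq0eval : ∀ t : ℝ, q0.eval t = (Polynomial.Chebyshev.T ℝ (k + 1)).eval (3 - 4 / β * t) := by
    intro t
    rw [hq0]
    simp [Polynomial.eval_comp]
  -- simplify Ttilde
  have hT : Ttilde (β / 2) β k = Polynomial.C c⁻¹ * q0 := by
    unfold Ttilde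
    rw [hq0, hcdef,
      show (β + β / 2) / (β - β / 2) = 3 by
        rw [show β + β / 2 = 3 * (β - β / 2) by ring]
        exact mul_div_cancel_right₀ 3 (by intro h; nlinarith [hβ] : β - β / 2 ≠ 0),
      show 2 / (β - β / 2) = 4 / β by
        rw [show β - β / 2 = β / 2 by ring, div_div_eq_mul_div]
        norm_num]
  clear_value c q0
  -- matrix setup
  have hMdet : IsUnit M.det := (Matrix.isUnit_iff_isUnit_det M).mp hM.isUnit
  haveI : Invertible M := M.invertibleOfIsUnitDet hMdet
  set Dh : Matrix n n ℝ := (by open scoped MatrixOrder in exact CFC.sqrt D) with hDhdef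
  have hDhPSD : Dh.PosSemidef := by open scoped MatrixOrder in exact (CFC.sqrt_nonneg D).posSemidef
  have hDhH : Dh.IsHermitian := hDhPSD.1
  have hDhsq : Dh * Dh = D := by open scoped MatrixOrder in exact CFC.sqrt_mul_sqrt_self D hD.posSemidef.nonneg
  clear_value Dh
  have hDhdet : IsUnit Dh.det := by
    have h1 : Dh.det * Dh.det = D.det := by rw [← Matrix.det_mul, hDhsq]
    have h2 : D.det ≠ 0 := hD.det_pos.ne'
    exact isUnit_iff_ne_zero.mpr fun h => h2 (by rw [← h1, h, mul_zero])
  haveI : Invertible Dh := Dh.invertibleOfIsUnitDet hDhdet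
  have hUV : Dh⁻¹ * Dh = 1 := Matrix.inv_mul_of_invertible Dh
  have hVU : Dh * Dh⁻¹ = 1 := Matrix.mul_inv_of_invertible Dh
  set S : Matrix n n ℝ := Dh⁻¹ * M * Dh⁻¹ with hSdef
  have hSherm : S.IsHermitian := by
    have : Sᴴ = S := by
      rw [hSdef, Matrix.conjTranspose_mul, Matrix.conjTranspose_mul,
        hDhH.inv.eq, hM.1.eq, Matrix.mul_assoc]
    exact this
  have hSpsd : S.PosSemidef := by
    have := hM.posSemidef.mul_mul_conjTranspose_same Dh⁻¹
    rw [hDhH.inv.eq] at this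
    rw [hSdef]
    exact this
  have hSright : S * (Dh * M⁻¹ * Dh) = 1 := by
    rw [hSdef]
    simp only [Matrix.mul_assoc, Matrix.inv_mul_cancel_left_of_invertible,
      Matrix.mul_inv_cancel_left_of_invertible, Matrix.inv_mul_of_invertible]
  clear_value S
  haveI : Invertible S := invertibleOfRightInverse S _ hSright
  have hSinv : S⁻¹ = Dh * M⁻¹ * Dh := Matrix.inv_eq_right_inv hSright
  -- eigenvalues of S
  have hEigPos : ∀ i, 0 < hSherm.eigenvalues i := by
    intro i
    have h0 : 0 ≤ hSherm.eigenvalues i := hSpsd.eigenvalues_nonneg i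
    have hSdet : IsUnit S.det := S.isUnit_iff_isUnit_det.mp (isUnit_of_invertible S)
    have hprod : S.det = ∏ j, hSherm.eigenvalues j := by
      simpa using hSherm.det_eq_prod_eigenvalues
    have hne : hSherm.eigenvalues i ≠ 0 := by
      intro h
      have : S.det = 0 := by
        rw [hprod]; exact Finset.prod_eq_zero (Finset.mem_univ i) h
      exact (this ▸ hSdet).ne_zero rfl
    exact lt_of_le_of_ne h0 (Ne.symm hne)
  have hEigLe : ∀ i, hSherm.eigenvalues i ≤ β := by
    intro i
    refine myEigLe hSherm ?_ i
    have key : β • (1 : Matrix n n ℝ) - S = Dh⁻¹ᴴ * (β • D - M) * Dh⁻¹ := by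
      rw [hDhH.inv.eq, hSdef, ← hDhsq]
      simp only [Matrix.mul_sub, Matrix.sub_mul, Matrix.mul_smul, Matrix.smul_mul,
        Matrix.mul_assoc, Matrix.inv_mul_cancel_left_of_invertible,
        Matrix.mul_inv_cancel_left_of_invertible, Matrix.inv_mul_of_invertible, hUV, hVU,
        Matrix.mul_one, Matrix.one_mul]
    rw [key]
    exact hspec.conjTranspose_mul_mul_same Dh⁻¹
  -- commutation
  set Q : Matrix n n ℝ := aeval S q0 with hQdef
  have hcomm : S * Q = Q * S := by
    rw [hQdef]
    have : aeval S (X * q0) = aeval S (q0 * X) := by rw [mul_comm]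
    simpa [_root_.map_mul] using this
  clear_value Q
  have hScomm : S⁻¹ * Q = Q * S⁻¹ := by
    calc S⁻¹ * Q = S⁻¹ * Q * (S * S⁻¹) := by
          rw [Matrix.mul_inv_of_invertible, Matrix.mul_one]
      _ = S⁻¹ * (Q * S) * S⁻¹ := by simp only [Matrix.mul_assoc]
      _ = S⁻¹ * (S * Q) * S⁻¹ := by rw [hcomm]
      _ = Q * S⁻¹ := by
          rw [← Matrix.mul_assoc S⁻¹ S Q, Matrix.inv_mul_of_invertible, Matrix.one_mul]
  have hScomm' : ∀ B : Matrix n n ℝ, S⁻¹ * (Q * B) = Q * (S⁻¹ * B) := by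
    intro B
    rw [← Matrix.mul_assoc, hScomm, Matrix.mul_assoc]
  -- conjugation identities
  have hconj : D⁻¹ * M = Dh⁻¹ * S * Dh := by
    rw [hSdef, ← hDhsq, Matrix.mul_inv_rev]
    simp only [Matrix.mul_assoc, Matrix.inv_mul_cancel_left_of_invertible,
      Matrix.mul_inv_cancel_left_of_invertible, Matrix.inv_mul_cancel_right_of_invertible,
      hUV, hVU, Matrix.mul_one, Matrix.one_mul]
  have hW : aeval (D⁻¹ * M) q0 = Dh⁻¹ * Q * Dh := by
    rw [hconj, myAevalConj Dh⁻¹ Dh S hUV hVU q0, hQdef]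
  have hMinv : M⁻¹ = Dh⁻¹ * S⁻¹ * Dh⁻¹ := by
    rw [hSinv]
    simp only [Matrix.mul_assoc, Matrix.inv_mul_cancel_left_of_invertible,
      Matrix.mul_inv_cancel_left_of_invertible, Matrix.mul_inv_cancel_right_of_invertible,
      Matrix.inv_mul_cancel_right_of_invertible, hUV, hVU, Matrix.mul_one, Matrix.one_mul]
  -- scalar facts
  have hs1 : 1 - σ = 1 / (1 + c) := by
    rw [hσ]
    field_simp
    ring
  have hs2 : σ * c⁻¹ = 1 / (1 + c) := by
    rw [hσ]
    field_simp
  -- main identity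
  have hL : M⁻¹ - σ • chebJacobiPrecond M D (β / 2) β k
      = (1 / (1 + c)) • (Dh⁻¹ * ((1 + Q) * S⁻¹) * Dh⁻¹) := by
    unfold chebJacobiPrecond
    rw [hT, _root_.map_mul, aeval_C, Algebra.algebraMap_eq_smul_one, hW]
    have expand : (1 - c⁻¹ • (1 : Matrix n n ℝ) * (Dh⁻¹ * Q * Dh)) * M⁻¹
        = M⁻¹ - c⁻¹ • (Dh⁻¹ * Q * Dh * M⁻¹) := by
      rw [Matrix.sub_mul, Matrix.one_mul, smul_mul_assoc, Matrix.one_mul, smul_mul_assoc]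
    rw [expand]
    have step1 : M⁻¹ - σ • (M⁻¹ - c⁻¹ • (Dh⁻¹ * Q * Dh * M⁻¹))
        = (1 - σ) • M⁻¹ + (σ * c⁻¹) • (Dh⁻¹ * Q * Dh * M⁻¹) := by
      module
    rw [step1, hs1, hs2, ← smul_add]
    congr 1
    have hQDhM : Dh⁻¹ * Q * Dh * M⁻¹ = Dh⁻¹ * (Q * S⁻¹) * Dh⁻¹ := by
      rw [hMinv]
      simp only [Matrix.mul_assoc, Matrix.mul_inv_cancel_left_of_invertible]
    rw [hQDhM, hMinv, Matrix.add_mul, Matrix.one_mul, Matrix.mul_add, Matrix.add_mul]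
  -- right-hand side form
  have hG : aeval S ((1 + q0) * X) = (1 + Q) * S := by
    rw [_root_.map_mul, map_add]
    simp only [_root_.map_one, Polynomial.aeval_X, hQdef]
  have hR : (Dh * M⁻¹)ᴴ * (aeval S ((1 + q0) * X)) * (Dh * M⁻¹)
      = Dh⁻¹ * ((1 + Q) * S⁻¹) * Dh⁻¹ := by
    have hAH : (Dh * M⁻¹)ᴴ = M⁻¹ * Dh := by
      rw [Matrix.conjTranspose_mul, hM.1.inv.eq, hDhH.eq]
    rw [hG, hAH, hMinv]
    simp only [Matrix.mul_add, Matrix.add_mul, Matrix.mul_one, Matrix.one_mul, Matrix.mul_assoc,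
      Matrix.inv_mul_cancel_left_of_invertible, Matrix.mul_inv_cancel_left_of_invertible,
      Matrix.inv_mul_cancel_right_of_invertible, Matrix.mul_inv_cancel_right_of_invertible,
      hScomm']
  -- positivity of the middle matrix
  have hGpsd : (aeval S ((1 + q0) * X)).PosSemidef := by
    refine myAevalPSD hSherm _ fun i => ?_
    have hl := hEigPos i
    have hu := hEigLe i
    set t := hSherm.eigenvalues i
    have hfrac : 4 / β * t ≤ 4 := by
      rw [div_mul_eq_mul_div, div_le_iff₀ hβ]
      nlinarith
    have harg : -1 ≤ 3 - 4 / β * t := by linarith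
    have hch : -1 ≤ (Polynomial.Chebyshev.T ℝ (k + 1)).eval (3 - 4 / β * t) := by
      rw [hkey]; exact cheb_ge_neg_one (k + 1) _ harg
    have heval : Polynomial.eval t ((1 + q0) * X)
        = (1 + (Polynomial.Chebyshev.T ℝ (k + 1)).eval (3 - 4 / β * t)) * t := by
      rw [Polynomial.eval_mul, Polynomial.eval_add, Polynomial.eval_one, Polynomial.eval_X,
        hq0eval]
    rw [heval]
    exact mul_nonneg (by linarith) hl.le
  rw [hL, ← hR]
  exact myPosSemidefSmul (hGpsd.conjTranspose_mul_mul_same (Dh * M⁻¹)) (by positivity)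
end
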